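/- arXiv:1404.1067 — 2 statements merged into one kernel-verified Lean document; each statement's English description precedes it below -/
import Mathlib

section
/- For every (s,p) in the symmetrized bidisc G_2 there exists a symmetric 2×2 matrix x with operator norm at most 1 such that tr x = s and det x = p. -/
open Complex Metric Set Matrix
open scoped Matrix.Norms.L2Operator

lemma diag_norm_le (a b : ℂ) (ha : ‖a‖ ≤ 1) (hb : ‖b‖ ≤ 1) :
    ‖Matrix.diagonal ![a, b]‖ ≤ 1 := by
  rw [Matrix.l2_opNorm_def]
  apply ContinuousLinearMap.opNorm_le_bound _ zero_le_one
  intro x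
  rw [one_mul]
  have hx : ∀ y : EuclideanSpace ℂ (Fin 2), ‖y‖ = Real.sqrt (‖y 0‖ ^ 2 + ‖y 1‖ ^ 2) := by
    intro y
    rw [EuclideanSpace.norm_eq, Fin.sum_univ_two]
  have hmul : ((Matrix.toEuclideanLin.trans LinearMap.toContinuousLinearMap)
      (Matrix.diagonal ![a, b])) x = (EuclideanSpace.equiv (Fin 2) ℂ).symm
        ((Matrix.diagonal ![a, b]) *ᵥ x) := rfl
  rw [hmul, hx, hx]
  apply Real.sqrt_le_sqrt
  have h0 : ((Matrix.diagonal ![a, b]) *ᵥ x) 0 = a * x 0 := by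
    simp [Matrix.mulVec, dotProduct, Fin.sum_univ_two, Matrix.diagonal]
  have h1 : ((Matrix.diagonal ![a, b]) *ᵥ x) 1 = b * x 1 := by
    simp [Matrix.mulVec, dotProduct, Fin.sum_univ_two, Matrix.diagonal]
  have : ∀ (c z : ℂ), ‖c‖ ≤ 1 → ‖c * z‖ ^ 2 ≤ ‖z‖ ^ 2 := by
    intro c z hc
    rw [norm_mul, mul_pow]
    have h2 : ‖c‖ ^ 2 ≤ 1 := by nlinarith [norm_nonneg c]
    calc ‖c‖ ^ 2 * ‖z‖ ^ 2 ≤ 1 * ‖z‖ ^ 2 := mul_le_mul_of_nonneg_right h2 (sq_nonneg _)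
      _ = ‖z‖ ^ 2 := one_mul _
  show ‖((Matrix.diagonal ![a, b]) *ᵥ x) 0‖ ^ 2 + ‖((Matrix.diagonal ![a, b]) *ᵥ x) 1‖ ^ 2 ≤ _
  calc ‖((Matrix.diagonal ![a, b]) *ᵥ x) 0‖ ^ 2 + ‖((Matrix.diagonal ![a, b]) *ᵥ x) 1‖ ^ 2
      = ‖a * x 0‖ ^ 2 + ‖b * x 1‖ ^ 2 := by rw [h0, h1]
    _ ≤ ‖x 0‖ ^ 2 + ‖x 1‖ ^ 2 := add_le_add (this a (x 0) ha) (this b (x 1) hb)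

/-- Every point of the symmetrized bidisc lifts to a symmetric `2×2` matrix of operator
norm at most `1` with the prescribed trace and determinant. -/
theorem exists_symmetric_lift (s p : ℂ)
    (h : (s, p) ∈ (fun w : ℂ × ℂ => (w.1 + w.2, w.1 * w.2)) ''
      (ball (0 : ℂ) 1 ×ˢ ball (0 : ℂ) 1)) :
    ∃ x : Matrix (Fin 2) (Fin 2) ℂ, x = xᵀ ∧ ‖x‖ ≤ 1 ∧ x.trace = s ∧ x.det = p := by
  obtain ⟨⟨a, b⟩, ⟨ha, hb⟩, heq⟩ := h
  simp only [Prod.mk.injEq] at heq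
  obtain ⟨hs, hp⟩ := heq
  rw [mem_ball_zero_iff] at ha hb
  refine ⟨Matrix.diagonal ![a, b], (Matrix.diagonal_transpose _).symm,
    diag_norm_le a b ha.le hb.le, ?_, ?_⟩
  · simp [Matrix.trace_diagonal, Fin.sum_univ_two, hs]
  · simp [Matrix.det_diagonal, Fin.prod_univ_two, hp]
end

section
/- Let ψ₁₁, ψ₂₂, ψ₁₂, ψ₂₁ : 𝔻 → ℂ be holomorphic with the matrix (ψ_{ij}(λ)) of operator norm at most 1 for all λ, and suppose ψ₁₁ = B₁h, ψ₂₂ = B₂h for finite Blaschke products (or unimodular constants) B₁, B₂ and a holomorphic h. Then the matrix function λ ↦ [[h(λ), ψ₁₂(λ)],[ψ₂₁(λ), B₁(λ)B₂(λ)h(λ)]] also takes values in the closed operator-norm unit ball, has the same trace-symmetrized image under π∘(swap of columns), i.e. the same (off-diagonal-swapped trace, determinant) pair, and satisfies |B₁B₂h| ≤ |h| on 𝔻. -/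
open Complex Metric Set Matrix
open scoped ComplexConjugate Matrix.Norms.L2Operator

/-- `B` is a finite Blaschke product (a unimodular constant when the degree is `0`). -/
def IsFiniteBlaschke (B : ℂ → ℂ) : Prop :=
  ∃ (d : ℕ) (ω : ℂ) (a : Fin d → ℂ), ‖ω‖ = 1 ∧
    (∀ j, ‖a j‖ < 1) ∧
    ∀ z : ℂ, B z = ω * ∏ j, (z - a j) / (1 - conj (a j) * z)

/-- The column-swap operation `x ↦ xᵗ` of the paper: `[[a,b],[c,d]] ↦ [[b,a],[d,c]]`. -/
def colSwap (x : Matrix (Fin 2) (Fin 2) ℂ) : Matrix (Fin 2) (Fin 2) ℂ :=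
  Matrix.of ![![x 0 1, x 0 0], ![x 1 1, x 1 0]]


/-! ### Auxiliary lemmas on Blaschke factors -/

/-- A single Blaschke factor. -/
noncomputable def bl (a z : ℂ) : ℂ := (z - a) / (1 - conj a * z)

lemma mem_ball_iff_abs {z : ℂ} : z ∈ ball (0 : ℂ) 1 ↔ ‖z‖ < 1 := by
  simp [mem_ball, Complex.dist_eq]

lemma normSq_key (a z : ℂ) :
    normSq (1 - conj a * z) - normSq (z - a) = (1 - normSq a) * (1 - normSq z) := by
  simp [Complex.normSq_apply, Complex.sub_re, Complex.sub_im, Complex.mul_re, Complex.mul_im,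
    Complex.conj_re, Complex.conj_im, Complex.one_re, Complex.one_im]
  ring

lemma denom_ne (a z : ℂ) (ha : ‖a‖ < 1) (hz : ‖z‖ < 1) :
    1 - conj a * z ≠ 0 := by
  intro hcon
  have h1 : (1 : ℂ) = conj a * z := by linear_combination hcon
  have : ‖conj a * z‖ < 1 := by
    rw [norm_mul, Complex.norm_conj]
    nlinarith [norm_nonneg a, norm_nonneg z]
  rw [← h1] at this; simp at this

lemma abs_bl_lt (a z : ℂ) (ha : ‖a‖ < 1) (hz : ‖z‖ < 1) :
    ‖bl a z‖ < 1 := by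
  have hd := denom_ne a z ha hz
  have hkey := normSq_key a z
  have hna : normSq a < 1 := by rw [← Complex.sq_norm] at *; nlinarith [norm_nonneg a]
  have hnz : normSq z < 1 := by rw [← Complex.sq_norm] at *; nlinarith [norm_nonneg z]
  have hlt : normSq (z - a) < normSq (1 - conj a * z) := by nlinarith
  have hdpos : 0 < ‖1 - conj a * z‖ := norm_pos_iff.mpr hd
  rw [bl, norm_div, div_lt_one hdpos]
  have := Real.sqrt_lt_sqrt (normSq_nonneg _) hlt
  simpa [Complex.norm_def] using this

lemma bl_mem_ball (a z : ℂ) (ha : ‖a‖ < 1) (hz : ‖z‖ < 1) :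
    bl a z ∈ ball (0 : ℂ) 1 := by
  simpa [mem_ball, dist_eq, Complex.dist_eq] using abs_bl_lt a z ha hz

lemma bl_bl (a z : ℂ) (ha : ‖a‖ < 1) (hz : ‖z‖ < 1) :
    bl a (bl (-a) z) = z := by
  have hd1 : 1 - conj (-a) * z ≠ 0 := denom_ne (-a) z (by simpa using ha) hz
  have hblz := abs_bl_lt (-a) z (by simpa using ha) hz
  have hd2 : 1 - conj a * bl (-a) z ≠ 0 := denom_ne a _ ha hblz
  have hd1' : 1 + conj a * z ≠ 0 := by
    intro hc; apply hd1; rw [map_neg]; linear_combination hc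
  have hne : 1 - conj a * a ≠ 0 := by
    intro hcon
    have h1 : (1 : ℂ) = conj a * a := by linear_combination hcon
    have : ‖conj a * a‖ < 1 := by
      rw [norm_mul, Complex.norm_conj]
      nlinarith [norm_nonneg a]
    rw [← h1] at this; simp at this
  unfold bl
  simp only [map_neg, sub_neg_eq_add, neg_mul]
  have e1 : 1 - conj a * ((z + a) / (1 + conj a * z)) = (1 - conj a * a) / (1 + conj a * z) := by
    field_simp; ring
  have e2 : (z + a) / (1 + conj a * z) - a = (z * (1 - conj a * a)) / (1 + conj a * z) := by
    rw [eq_div_iff hd1', sub_mul, div_mul_cancel₀ _ hd1']; ring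
  rw [e1, e2]
  rw [div_div_div_cancel_right₀ hd1', mul_div_assoc, div_self hne, mul_one]

lemma bl_differentiableOn (a : ℂ) (ha : ‖a‖ < 1) :
    DifferentiableOn ℂ (bl a) (ball (0 : ℂ) 1) := by
  apply DifferentiableOn.div
  · exact (differentiable_id.sub_const a).differentiableOn
  · exact ((differentiable_const _).mul differentiable_id).const_sub 1 |>.differentiableOn
  · exact fun z hz => denom_ne a z ha (mem_ball_iff_abs.mp hz)

section Division

variable {E : Type*} [NormedAddCommGroup E] [NormedSpace ℂ E]

/-- maximum modulus step: `‖z • F z‖ ≤ 1` on the disc for holomorphic `F` gives `‖F z‖ ≤ 1`. -/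
lemma norm_le_one_of_smul_le (F : ℂ → E) (hF : DifferentiableOn ℂ F (ball (0 : ℂ) 1))
    (hb : ∀ z ∈ ball (0 : ℂ) 1, ‖z‖ * ‖F z‖ ≤ 1) :
    ∀ z ∈ ball (0 : ℂ) 1, ‖F z‖ ≤ 1 := by
  intro z hz
  by_contra hc
  push_neg at hc
  set c := ‖F z‖ with hcdef
  have hzlt : ‖z‖ < 1 := by simpa [mem_ball, dist_eq_norm] using hz
  have hcpos : 0 < c := lt_trans one_pos hc
  set ρ : ℝ := (max ‖z‖ (1 / c) + 1) / 2 with hρ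
  have hmaxlt : max ‖z‖ (1 / c) < 1 := by
    apply max_lt hzlt
    rw [div_lt_one hcpos]; exact hc
  have hρlt1 : ρ < 1 := by rw [hρ]; linarith
  have hρpos : 0 < ρ := by
    have : (0:ℝ) ≤ max ‖z‖ (1 / c) := le_max_of_le_left (norm_nonneg _)
    rw [hρ]; linarith
  have hzρ : ‖z‖ < ρ := by
    have : ‖z‖ ≤ max ‖z‖ (1 / c) := le_max_left _ _
    rw [hρ]; linarith
  have hinv : 1 / c < ρ := by
    have : 1 / c ≤ max ‖z‖ (1 / c) := le_max_right _ _
    rw [hρ]; linarith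
  have hle : ‖F z‖ ≤ 1 / ρ := by
    apply Complex.norm_le_of_forall_mem_frontier_norm_le (U := ball (0:ℂ) ρ) isBounded_ball
    · exact hF.diffContOnCl_ball (closedBall_subset_ball hρlt1)
    · intro w hw
      rw [frontier_ball _ hρpos.ne'] at hw
      have hwρ : ‖w‖ = ρ := by simpa [mem_sphere_iff_norm] using hw
      have hw1 : w ∈ ball (0:ℂ) 1 := by
        simp [mem_ball, dist_eq_norm, hwρ, hρlt1]
      have := hb w hw1
      rw [hwρ] at this
      rw [le_div_iff₀ hρpos]
      linarith
    · exact subset_closure (by simpa [mem_ball, dist_eq_norm] using hzρ)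
  have : 1 / ρ < c := by
    rw [div_lt_iff₀ hρpos]
    calc (1:ℝ) = c * (1/c) := by field_simp
    _ < c * ρ := by exact mul_lt_mul_of_pos_left hinv hcpos
  linarith [hle]

/-- dividing one Blaschke factor out preserves the bound. -/
lemma div_factor (a : ℂ) (ha : ‖a‖ < 1) (g : ℂ → E)
    (hg : DifferentiableOn ℂ g (ball (0 : ℂ) 1))
    (hb : ∀ z ∈ ball (0 : ℂ) 1, ‖bl a z • g z‖ ≤ 1) :
    ∀ z ∈ ball (0 : ℂ) 1, ‖g z‖ ≤ 1 := by
  have hna : ‖-a‖ < 1 := by simpa using ha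
  set F : ℂ → E := fun z => g (bl (-a) z) with hF
  have hFd : DifferentiableOn ℂ F (ball (0:ℂ) 1) := by
    apply hg.comp (bl_differentiableOn (-a) hna)
    intro w hw
    exact bl_mem_ball _ _ hna (mem_ball_iff_abs.mp hw)
  have key : ∀ z ∈ ball (0:ℂ) 1, ‖z‖ * ‖F z‖ ≤ 1 := by
    intro z hz
    have hz' := mem_ball_iff_abs.mp hz
    have hmem := bl_mem_ball (-a) z hna hz'
    have := hb _ hmem
    rw [bl_bl a z ha hz'] at this
    simpa [norm_smul] using this
  intro w hw
  have hw' := mem_ball_iff_abs.mp hw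
  have h1 : bl a w ∈ ball (0:ℂ) 1 := bl_mem_ball a w ha hw'
  have h2 : bl (-a) (bl a w) = w := by
    have := bl_bl (-a) w hna hw'
    simpa using this
  have := norm_le_one_of_smul_le F hFd key (bl a w) h1
  rw [hF] at this
  simp only at this
  rw [h2] at this
  exact this

/-- dividing a full Blaschke product out preserves the bound. -/
lemma div_prod (d : ℕ) (a : Fin d → ℂ) (ha : ∀ j, ‖a j‖ < 1) (f : ℂ → E)
    (hf : DifferentiableOn ℂ f (ball (0 : ℂ) 1))
    (hb : ∀ z ∈ ball (0 : ℂ) 1, ‖(∏ j, bl (a j) z) • f z‖ ≤ 1) :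
    ∀ z ∈ ball (0 : ℂ) 1, ‖f z‖ ≤ 1 := by
  induction d with
  | zero => intro z hz; simpa using hb z hz
  | succ n ih =>
    set g : ℂ → E := fun z => (∏ j : Fin n, bl (a j.castSucc) z) • f z with hgdef
    have hgd : DifferentiableOn ℂ g (ball (0:ℂ) 1) := by
      apply DifferentiableOn.smul _ hf
      exact DifferentiableOn.fun_finsetProd fun (j : Fin n) _ => bl_differentiableOn _ (ha j.castSucc)
    have hgb : ∀ z ∈ ball (0:ℂ) 1, ‖bl (a (Fin.last n)) z • g z‖ ≤ 1 := by
      intro z hz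
      have := hb z hz
      rw [Fin.prod_univ_castSucc] at this
      rw [hgdef]
      simp only [smul_smul]
      rw [mul_comm]
      exact this
    have := div_factor (a (Fin.last n)) (ha _) g hgd hgb
    exact ih (fun j => a j.castSucc) (fun j => ha _) (fun z hz => this z hz)

lemma blaschke_div {B : ℂ → ℂ} (hB : IsFiniteBlaschke B) (f : ℂ → E)
    (hf : DifferentiableOn ℂ f (ball (0 : ℂ) 1))
    (hb : ∀ z ∈ ball (0 : ℂ) 1, ‖B z • f z‖ ≤ 1) :
    ∀ z ∈ ball (0 : ℂ) 1, ‖f z‖ ≤ 1 := by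
  obtain ⟨d, ω, a, hω, ha, hBeq⟩ := hB
  apply div_prod d a ha f hf
  intro z hz
  have := hb z hz
  rw [hBeq z] at this
  rw [mul_smul] at this
  rw [norm_smul] at this
  simp only [hω, one_mul] at this
  exact this

end Division

lemma blaschke_differentiableOn {B : ℂ → ℂ} (hB : IsFiniteBlaschke B) :
    DifferentiableOn ℂ B (ball (0 : ℂ) 1) := by
  obtain ⟨d, ω, a, hω, ha, hBeq⟩ := hB
  have : B = fun z => ω * ∏ j, bl (a j) z := funext fun z => hBeq z
  rw [this]
  exact (DifferentiableOn.fun_finsetProd fun j _ => bl_differentiableOn _ (ha j)).const_mul ω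

lemma blaschke_abs_le {B : ℂ → ℂ} (hB : IsFiniteBlaschke B) {z : ℂ} (hz : z ∈ ball (0 : ℂ) 1) :
    ‖B z‖ ≤ 1 := by
  obtain ⟨d, ω, a, hω, ha, hBeq⟩ := hB
  rw [hBeq z, norm_mul, hω, one_mul, norm_prod]
  apply Finset.prod_le_one (fun j _ => norm_nonneg _)
  intro j _
  exact (abs_bl_lt (a j) z (ha j) (mem_ball_iff_abs.mp hz)).le

/-! ### Matrix lemmas -/

lemma diag_norm_le_s19 (c : ℂ) (hc : ‖c‖ ≤ 1) :
    ‖Matrix.of ![![(1:ℂ), 0], ![0, c]]‖ ≤ 1 := by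
  rw [Matrix.l2_opNorm_def]
  apply ContinuousLinearMap.opNorm_le_bound _ zero_le_one
  intro x
  rw [one_mul]
  set v : Fin 2 → ℂ := WithLp.equiv 2 _ x with hv
  have hx : x = (WithLp.equiv 2 _).symm v := by simp [hv]
  rw [hx]
  simp only [LinearEquiv.trans_apply,
    LinearMap.coe_toContinuousLinearMap']
  rw [EuclideanSpace.norm_eq, EuclideanSpace.norm_eq]
  apply Real.sqrt_le_sqrt
  have hmv : Matrix.toLin' (Matrix.of ![![(1:ℂ), 0], ![0, c]]) v = ![v 0, c * v 1] := by
    funext i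
    fin_cases i <;> simp [Matrix.toLin'_apply, Matrix.mulVec, dotProduct, Fin.sum_univ_two]
  rw [show (toEuclideanLin (Matrix.of ![![(1:ℂ), 0], ![0, c]])) ((WithLp.equiv 2 (Fin 2 → ℂ)).symm v)
      = (WithLp.equiv 2 _).symm (Matrix.toLin' (Matrix.of ![![(1:ℂ), 0], ![0, c]]) v) from rfl, hmv]
  simp only [WithLp.equiv_symm_apply, Fin.sum_univ_two]
  simp only [Matrix.cons_val_zero, Matrix.cons_val_one, Matrix.head_cons]
  have : ‖c * v 1‖ ≤ ‖v 1‖ := by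
    rw [norm_mul]
    nlinarith [norm_nonneg (v 1), hc]
  nlinarith [norm_nonneg (c * v 1), norm_nonneg (v 1)]

/-- Replacing the diagonal `(B₁h, B₂h)` of a closed-ball-valued holomorphic matrix function
by `(h, B₁B₂h)` again lands in the closed unit ball, leaves the column-swapped
(trace, determinant) pair unchanged, and satisfies `|B₁B₂h| ≤ |h|` on `𝔻`. -/
theorem diagonal_rebalancing (ψ11 ψ22 ψ12 ψ21 h B1 B2 : ℂ → ℂ)
    (hψ11 : DifferentiableOn ℂ ψ11 (ball (0 : ℂ) 1))
    (hψ22 : DifferentiableOn ℂ ψ22 (ball (0 : ℂ) 1))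
    (hψ12 : DifferentiableOn ℂ ψ12 (ball (0 : ℂ) 1))
    (hψ21 : DifferentiableOn ℂ ψ21 (ball (0 : ℂ) 1))
    (hh : DifferentiableOn ℂ h (ball (0 : ℂ) 1))
    (hnorm : ∀ l ∈ ball (0 : ℂ) 1, ‖Matrix.of ![![ψ11 l, ψ12 l], ![ψ21 l, ψ22 l]]‖ ≤ 1)
    (hB1 : IsFiniteBlaschke B1) (hB2 : IsFiniteBlaschke B2)
    (h11 : ∀ l ∈ ball (0 : ℂ) 1, ψ11 l = B1 l * h l)
    (h22 : ∀ l ∈ ball (0 : ℂ) 1, ψ22 l = B2 l * h l) :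
    ∀ l ∈ ball (0 : ℂ) 1,
      ‖Matrix.of ![![h l, ψ12 l], ![ψ21 l, B1 l * B2 l * h l]]‖ ≤ 1 ∧
      (colSwap (Matrix.of ![![h l, ψ12 l], ![ψ21 l, B1 l * B2 l * h l]])).trace =
        (colSwap (Matrix.of ![![ψ11 l, ψ12 l], ![ψ21 l, ψ22 l]])).trace ∧
      (colSwap (Matrix.of ![![h l, ψ12 l], ![ψ21 l, B1 l * B2 l * h l]])).det =
        (colSwap (Matrix.of ![![ψ11 l, ψ12 l], ![ψ21 l, ψ22 l]])).det ∧
      ‖B1 l * B2 l * h l‖ ≤ ‖h l‖ := by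
  have hB1d := blaschke_differentiableOn hB1
  have hB2d := blaschke_differentiableOn hB2
  -- the rebalanced matrix function
  set M : ℂ → Matrix (Fin 2) (Fin 2) ℂ :=
    fun l => Matrix.of ![![h l, ψ12 l], ![ψ21 l, B1 l * B2 l * h l]] with hM
  -- differentiability of M
  have hMd : DifferentiableOn ℂ M (ball (0:ℂ) 1) := by
    have : M = fun l =>
        h l • Matrix.of ![![(1:ℂ), 0], ![0, 0]] + ψ12 l • Matrix.of ![![(0:ℂ), 1], ![0, 0]] +
        ψ21 l • Matrix.of ![![(0:ℂ), 0], ![1, 0]] +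
        (B1 l * B2 l * h l) • Matrix.of ![![(0:ℂ), 0], ![0, 1]] := by
      funext l
      ext i j
      fin_cases i <;> fin_cases j <;>
        simp [hM, Matrix.add_apply, Matrix.smul_apply, smul_eq_mul]
    rw [this]
    apply DifferentiableOn.add
    apply DifferentiableOn.add
    apply DifferentiableOn.add
    · exact hh.smul_const _
    · exact hψ12.smul_const _
    · exact hψ21.smul_const _
    · exact ((hB1d.mul hB2d).mul hh).smul_const _
  -- the norm bound
  have hGood : ∀ l ∈ ball (0:ℂ) 1, ‖M l‖ ≤ 1 := by
    apply blaschke_div hB1 M hMd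
    intro l hl
    have hident : B1 l • M l =
        Matrix.of ![![(1:ℂ), 0], ![0, B1 l]] * Matrix.of ![![ψ11 l, ψ12 l], ![ψ21 l, ψ22 l]] *
          Matrix.of ![![(1:ℂ), 0], ![0, B1 l]] := by
      ext i j
      fin_cases i <;> fin_cases j <;>
        simp [hM, Matrix.mul_apply, Fin.sum_univ_two, Matrix.smul_apply, smul_eq_mul,
          h11 l hl, h22 l hl] <;>
        ring
    rw [hident]
    have hD : ‖Matrix.of ![![(1:ℂ), 0], ![0, B1 l]]‖ ≤ 1 :=
      diag_norm_le_s19 _ (blaschke_abs_le hB1 hl)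
    calc ‖_ * _ * _‖ ≤ ‖Matrix.of ![![(1:ℂ), 0], ![0, B1 l]] *
          Matrix.of ![![ψ11 l, ψ12 l], ![ψ21 l, ψ22 l]]‖ *
          ‖Matrix.of ![![(1:ℂ), 0], ![0, B1 l]]‖ := Matrix.l2_opNorm_mul _ _
      _ ≤ 1 := by
        have h1 : ‖Matrix.of ![![(1:ℂ), 0], ![0, B1 l]] *
            Matrix.of ![![ψ11 l, ψ12 l], ![ψ21 l, ψ22 l]]‖ ≤ 1 :=
          (Matrix.l2_opNorm_mul _ _).trans (mul_le_one₀ hD (norm_nonneg _) (hnorm l hl))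
        exact mul_le_one₀ h1 (norm_nonneg _) hD
  intro l hl
  refine ⟨hGood l hl, ?_, ?_, ?_⟩
  · simp [colSwap, Matrix.trace_fin_two]
  · simp only [colSwap, Matrix.det_fin_two, Matrix.of_apply]
    simp only [Matrix.cons_val', Matrix.cons_val_zero, Matrix.cons_val_one, Matrix.head_cons,
      Matrix.head_fin_const, Matrix.empty_val', Matrix.cons_val_fin_one]
    rw [h11 l hl, h22 l hl]
    ring
  · rw [norm_mul, norm_mul]
    have hb1 := blaschke_abs_le hB1 hl
    have hb2 := blaschke_abs_le hB2 hl
    have h3 : ‖B1 l‖ * ‖B2 l‖ ≤ 1 := by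
      nlinarith [norm_nonneg (B1 l), norm_nonneg (B2 l)]
    calc ‖B1 l‖ * ‖B2 l‖ * ‖h l‖
        ≤ 1 * ‖h l‖ := mul_le_mul_of_nonneg_right h3 (norm_nonneg _)
      _ = ‖h l‖ := one_mul _
end
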